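/- The polynomial identity (2 + X + X^3)(2 + X) = (1 + X)(4 + X^2 + X^3) holds in ℤ[X], and each of the four factors 2 + X + X^3, 2 + X, 1 + X, 4 + X^2 + X^3 is irreducible in the monoid of polynomials with nonnegative integer coefficients. -/

import Mathlib

open Polynomial

def NNcoeff (P : Polynomial ℤ) : Prop := ∀ n, 0 ≤ P.coeff n

def IrredNN (P : Polynomial ℤ) : Prop :=
  NNcoeff P ∧ P ≠ 1 ∧
    ∀ S T : Polynomial ℤ, NNcoeff S → NNcoeff T → P = S * T → S = 1 ∨ T = 1

lemma monic_pair (S T : Polynomial ℤ) (hS : NNcoeff S)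
    (h : S.leadingCoeff * T.leadingCoeff = 1) : S.Monic ∧ T.Monic := by
  rcases Int.mul_eq_one_iff_eq_one_or_neg_one.mp h with ⟨h1, h2⟩ | ⟨h1, h2⟩
  · exact ⟨h1, h2⟩
  · have := hS S.natDegree
    rw [← coeff_natDegree] at h1
    omega

lemma coeff_mul_one' (p q : Polynomial ℤ) :
    (p * q).coeff 1 = p.coeff 0 * q.coeff 1 + p.coeff 1 * q.coeff 0 := by
  rw [coeff_mul]
  simp [Finset.Nat.sum_antidiagonal_eq_sum_range_succ_mk, Finset.sum_range_succ]

lemma coeff_mul_two' (p q : Polynomial ℤ) :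
    (p * q).coeff 2 = p.coeff 0 * q.coeff 2 + p.coeff 1 * q.coeff 1 + p.coeff 2 * q.coeff 0 := by
  rw [coeff_mul]
  simp [Finset.Nat.sum_antidiagonal_eq_sum_range_succ_mk, Finset.sum_range_succ]

lemma key (S T : Polynomial ℤ)
    (hSm : S.Monic) (hTm : T.Monic) (h1 : S.natDegree = 1) (h2 : T.natDegree = 2) :
    (S * T).coeff 0 = S.coeff 0 * T.coeff 0 ∧
    (S * T).coeff 1 = S.coeff 0 * T.coeff 1 + T.coeff 0 ∧
    (S * T).coeff 2 = S.coeff 0 + T.coeff 1 := by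
  have hs1 : S.coeff 1 = 1 := by
    have := hSm.coeff_natDegree; rwa [h1] at this
  have ht2 : T.coeff 2 = 1 := by
    have := hTm.coeff_natDegree; rwa [h2] at this
  have hs2 : S.coeff 2 = 0 := coeff_eq_zero_of_natDegree_lt (by omega)
  refine ⟨mul_coeff_zero S T, ?_, ?_⟩
  · rw [coeff_mul_one', hs1]; ring
  · rw [coeff_mul_two', hs1, hs2, ht2]; ring

lemma deg3_irred (P : Polynomial ℤ)
    (hNN : NNcoeff P) (hd : P.natDegree = 3) (hlc : P.leadingCoeff = 1)
    (hcontra : ∀ a c d : ℤ, 0 ≤ a → 0 ≤ c → 0 ≤ d →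
      P.coeff 0 = a * c → P.coeff 1 = a * d + c → P.coeff 2 = a + d → False)
    (hne1 : P ≠ 1) : IrredNN P := by
  refine ⟨hNN, hne1, ?_⟩
  intro S T hS hT hST
  have hlc' : S.leadingCoeff * T.leadingCoeff = 1 := by
    rw [← leadingCoeff_mul, ← hST, hlc]
  obtain ⟨hSm, hTm⟩ := monic_pair S T hS hlc'
  have hdeg : S.natDegree + T.natDegree = 3 := by
    rw [← natDegree_mul hSm.ne_zero hTm.ne_zero, ← hST, hd]
  have hcase : S.natDegree = 0 ∨ S.natDegree = 1 ∨ S.natDegree = 2 ∨ S.natDegree = 3 := by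
    omega
  rcases hcase with h0 | h1 | h2s | h3
  · exact Or.inl (hSm.natDegree_eq_zero.mp h0)
  · exfalso
    obtain ⟨e0, e1, e2⟩ := key S T hSm hTm h1 (by omega)
    rw [hST] at hcontra
    exact hcontra (S.coeff 0) (T.coeff 0) (T.coeff 1) (hS 0) (hT 0) (hT 1) e0 e1 e2
  · exfalso
    obtain ⟨e0, e1, e2⟩ := key T S hTm hSm (by omega) h2s
    rw [mul_comm T S] at e0 e1 e2
    rw [hST] at hcontra
    exact hcontra (T.coeff 0) (S.coeff 0) (S.coeff 1) (hT 0) (hS 0) (hS 1) e0 e1 e2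
  · exact Or.inr (hTm.natDegree_eq_zero.mp (by omega))

lemma deg1_irred (P : Polynomial ℤ)
    (hNN : NNcoeff P) (hd : P.natDegree = 1) (hlc : P.leadingCoeff = 1)
    (hne1 : P ≠ 1) : IrredNN P := by
  refine ⟨hNN, hne1, ?_⟩
  intro S T hS hT hST
  have hlc' : S.leadingCoeff * T.leadingCoeff = 1 := by
    rw [← leadingCoeff_mul, ← hST, hlc]
  obtain ⟨hSm, hTm⟩ := monic_pair S T hS hlc'
  have hdeg : S.natDegree + T.natDegree = 1 := by
    rw [← natDegree_mul hSm.ne_zero hTm.ne_zero, ← hST, hd]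
  rcases Nat.eq_zero_or_pos S.natDegree with h0 | h1
  · exact Or.inl (hSm.natDegree_eq_zero.mp h0)
  · exact Or.inr (hTm.natDegree_eq_zero.mp (by omega))

theorem stmt3 :
    (2 + X + X ^ 3) * (2 + X) = (1 + X) * (4 + X ^ 2 + X ^ 3 : Polynomial ℤ) ∧
    IrredNN (2 + X + X ^ 3) ∧ IrredNN (2 + X) ∧
    IrredNN (1 + X) ∧ IrredNN (4 + X ^ 2 + X ^ 3) := by
  refine ⟨by ring, ?_, ?_, ?_, ?_⟩
  · apply deg3_irred
    · intro n; rcases n with _ | _ | _ | _ | n <;> simp [coeff_X]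
    · compute_degree!
    · have h3 : ((2 : Polynomial ℤ) + X + X ^ 3).natDegree = 3 := by compute_degree!
      rw [leadingCoeff, h3]; simp [coeff_X]
    · intro a c d ha hc hd e0 e1 e2
      simp [coeff_X] at e0 e1 e2
      have ha0 : a = 0 := by omega
      subst ha0; simp at e0
    · intro h
      have := congrArg (fun p => coeff p 1) h
      simp [coeff_X, coeff_one] at this
  · apply deg1_irred
    · intro n; rcases n with _ | _ | n <;> simp [coeff_X]
    · compute_degree!
    · have h1 : ((2 : Polynomial ℤ) + X).natDegree = 1 := by compute_degree!
      rw [leadingCoeff, h1]; simp [coeff_X]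
    · intro h
      have := congrArg (fun p => coeff p 1) h
      simp [coeff_X, coeff_one] at this
  · apply deg1_irred
    · intro n; rcases n with _ | _ | n <;> simp [coeff_X, coeff_one]
    · compute_degree!
    · have h1 : ((1 : Polynomial ℤ) + X).natDegree = 1 := by compute_degree!
      rw [leadingCoeff, h1]; simp [coeff_X, coeff_one]
    · intro h
      have := congrArg (fun p => coeff p 1) h
      simp [coeff_X, coeff_one] at this
  · apply deg3_irred
    · intro n; rcases n with _ | _ | _ | _ | n <;> simp [coeff_X]
    · compute_degree!
    · have h3 : ((4 : Polynomial ℤ) + X ^ 2 + X ^ 3).natDegree = 3 := by compute_degree!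
      rw [leadingCoeff, h3]; simp [coeff_X]
    · intro a c d ha hc hd e0 e1 e2
      simp [coeff_X] at e0 e1 e2
      have hc0 : c = 0 := by nlinarith
      subst hc0; simp at e0
    · intro h
      have := congrArg (fun p => coeff p 2) h
      simp [coeff_X, coeff_one] at this
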